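/- Let C be a bivariate copula admitting a tail dependence function Λ, and let μ be a tail generating measure satisfying the following condition: there exists u₀ ∈ (0,1) such that μ(B_ε(u₀,u₀) ∩ [0,1]²) > 0 for every ε > 0, where B_ε(u₀,u₀) is the open ball of radius ε centered at (u₀,u₀). If λ_μ(C) = 1, then the tail dependence coefficient λ(C) = Λ(1,1) equals 1 (and hence, under this condition, λ_μ(C) = 1 if and only if λ(C) = 1). -/

import Mathlib

open MeasureTheory Filter Set

/-- A bivariate copula: `C : [0,1]² → [0,1]` with the grounded/marginal conditions and
the 2-increasing property. -/
def IsCopula (C : ℝ → ℝ → ℝ) : Prop :=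
  (∀ u ∈ Icc (0:ℝ) 1, ∀ v ∈ Icc (0:ℝ) 1, C u v ∈ Icc (0:ℝ) 1) ∧
  (∀ u ∈ Icc (0:ℝ) 1, C u 0 = 0 ∧ C 0 u = 0 ∧ C u 1 = u ∧ C 1 u = u) ∧
  (∀ u u' v v' : ℝ, u ∈ Icc (0:ℝ) 1 → u' ∈ Icc (0:ℝ) 1 →
    v ∈ Icc (0:ℝ) 1 → v' ∈ Icc (0:ℝ) 1 → u ≤ u' → v ≤ v' →
    0 ≤ C u' v' - C u' v - C u v' + C u v)

/-- `Λ` is the tail dependence function of `C`: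
`Λ(u,v) = lim_{p↓0} C(pu,pv)/p` for every `(u,v) ∈ [0,∞)²`. -/
def HasTDF (C Λ : ℝ → ℝ → ℝ) : Prop :=
  ∀ u v : ℝ, 0 ≤ u → 0 ≤ v →
    Tendsto (fun p : ℝ => C (p * u) (p * v) / p)
      (nhdsWithin (0:ℝ) (Ioi 0)) (nhds (Λ u v))

/-- A tail generating measure: a Borel probability measure on `[0,1]²` whose mass is not
concentrated on `{u = 0} ∪ {v = 0}`. -/
def IsTailGenMeasure (μ : Measure (ℝ × ℝ)) : Prop :=
  IsProbabilityMeasure μ ∧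
  μ ((Icc (0:ℝ) 1 ×ˢ Icc (0:ℝ) 1)ᶜ) = 0 ∧
  μ {q : ℝ × ℝ | q.1 = 0 ∨ q.2 = 0} < 1

/-- The μ-tail dependence measure: `λ_μ = (∫ Λ dμ) / (∫ min dμ)`, applied to
the tail dependence function `Λ` of the copula. -/
noncomputable def tdm (Λ : ℝ → ℝ → ℝ) (μ : Measure (ℝ × ℝ)) : ℝ :=
  (∫ q, Λ q.1 q.2 ∂μ) / (∫ q : ℝ × ℝ, min q.1 q.2 ∂μ)

lemma ev_small (u v : ℝ) (hu : 0 ≤ u) (hv : 0 ≤ v) :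
    ∀ᶠ p in nhdsWithin (0:ℝ) (Ioi 0),
      0 < p ∧ p * u ∈ Icc (0:ℝ) 1 ∧ p * v ∈ Icc (0:ℝ) 1 := by
  set M : ℝ := u + v + 1 with hM
  have hM0 : 0 < M := by positivity
  have hδ : (0:ℝ) < 1 / M := by positivity
  filter_upwards [Ioo_mem_nhdsGT_of_mem (left_mem_Ico.2 hδ)] with p hp
  obtain ⟨hp0, hpδ⟩ := hp
  have hpM : p * M < 1 := (lt_div_iff₀ hM0).mp hpδ
  refine ⟨hp0, ⟨by positivity, ?_⟩, ⟨by positivity, ?_⟩⟩ <;> nlinarith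

lemma C_mono₁ (C : ℝ → ℝ → ℝ) (hC : IsCopula C) {u u' v : ℝ}
    (hu : u ∈ Icc (0:ℝ) 1) (hu' : u' ∈ Icc (0:ℝ) 1) (hv : v ∈ Icc (0:ℝ) 1)
    (h : u ≤ u') : C u v ≤ C u' v := by
  have h2 := hC.2.2 u u' 0 v hu hu' (by simp) hv h hv.1
  have e1 := (hC.2.1 u hu).1
  have e2 := (hC.2.1 u' hu').1
  linarith

lemma C_mono₂ (C : ℝ → ℝ → ℝ) (hC : IsCopula C) {u v v' : ℝ}
    (hu : u ∈ Icc (0:ℝ) 1) (hv : v ∈ Icc (0:ℝ) 1) (hv' : v' ∈ Icc (0:ℝ) 1)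
    (h : v ≤ v') : C u v ≤ C u v' := by
  have h2 := hC.2.2 0 u v v' (by simp) hu hv hv' hu.1 h
  have e1 := (hC.2.1 v hv).2.1
  have e2 := (hC.2.1 v' hv').2.1
  linarith

lemma Lam_nonneg (C Λ : ℝ → ℝ → ℝ) (hC : IsCopula C) (hΛ : HasTDF C Λ)
    {u v : ℝ} (hu : 0 ≤ u) (hv : 0 ≤ v) : 0 ≤ Λ u v := by
  refine ge_of_tendsto (hΛ u v hu hv) ?_
  filter_upwards [ev_small u v hu hv] with p ⟨hp0, h1, h2⟩
  exact div_nonneg (hC.1 _ h1 _ h2).1 hp0.le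

lemma Lam_le_min (C Λ : ℝ → ℝ → ℝ) (hC : IsCopula C) (hΛ : HasTDF C Λ)
    {u v : ℝ} (hu : 0 ≤ u) (hv : 0 ≤ v) : Λ u v ≤ min u v := by
  rw [le_min_iff]
  constructor
  · refine le_of_tendsto (hΛ u v hu hv) ?_
    filter_upwards [ev_small u v hu hv] with p ⟨hp0, h1, h2⟩
    have h3 : C (p*u) (p*v) ≤ C (p*u) 1 :=
      C_mono₂ C hC h1 h2 (by simp) h2.2
    rw [(hC.2.1 _ h1).2.2.1] at h3
    rw [div_le_iff₀ hp0]
    linarith [h3, mul_comm u p]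
  · refine le_of_tendsto (hΛ u v hu hv) ?_
    filter_upwards [ev_small u v hu hv] with p ⟨hp0, h1, h2⟩
    have h3 : C (p*u) (p*v) ≤ C 1 (p*v) :=
      C_mono₁ C hC h1 (by simp) h2 h1.2
    rw [(hC.2.1 _ h2).2.2.2] at h3
    rw [div_le_iff₀ hp0]
    linarith [h3, mul_comm v p]

lemma Lam_mono (C Λ : ℝ → ℝ → ℝ) (hC : IsCopula C) (hΛ : HasTDF C Λ)
    {u u' v v' : ℝ} (hu : 0 ≤ u) (hv : 0 ≤ v) (huu : u ≤ u') (hvv : v ≤ v') :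
    Λ u v ≤ Λ u' v' := by
  have hu' : 0 ≤ u' := hu.trans huu
  have hv' : 0 ≤ v' := hv.trans hvv
  refine le_of_tendsto_of_tendsto (hΛ u v hu hv) (hΛ u' v' hu' hv') ?_
  filter_upwards [ev_small u' v' hu' hv'] with p ⟨hp0, h1, h2⟩
  have hu1 : p * u ∈ Icc (0:ℝ) 1 := ⟨by positivity, by nlinarith [h1.2]⟩
  have hv1 : p * v ∈ Icc (0:ℝ) 1 := ⟨by positivity, by nlinarith [h2.2]⟩
  have s1 : C (p*u) (p*v) ≤ C (p*u') (p*v) :=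
    C_mono₁ C hC hu1 h1 hv1 (by nlinarith)
  have s2 : C (p*u') (p*v) ≤ C (p*u') (p*v') :=
    C_mono₂ C hC h1 hv1 h2 (by nlinarith)
  exact (div_le_div_iff_of_pos_right hp0).mpr (s1.trans s2)

lemma Lam_homog (C Λ : ℝ → ℝ → ℝ) (hΛ : HasTDF C Λ)
    {t : ℝ} (ht : 0 < t) : Λ t t = t * Λ 1 1 := by
  have hmul : Tendsto (fun p : ℝ => p * t) (nhdsWithin (0:ℝ) (Ioi 0))
      (nhdsWithin (0:ℝ) (Ioi 0)) := by
    rw [tendsto_nhdsWithin_iff]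
    constructor
    · have : Tendsto (fun p : ℝ => p * t) (nhds 0) (nhds (0 * t)) :=
        (continuous_id.mul continuous_const).tendsto 0
      rw [zero_mul] at this
      exact this.mono_left nhdsWithin_le_nhds
    · filter_upwards [self_mem_nhdsWithin] with p (hp : (0:ℝ) < p)
      exact mul_pos hp ht
  have h2 := (hΛ 1 1 zero_le_one zero_le_one).comp hmul
  have h3 := h2.const_mul t
  refine tendsto_nhds_unique (hΛ t t ht.le ht.le) (h3.congr' ?_)
  filter_upwards [self_mem_nhdsWithin] with p (hp : (0:ℝ) < p)
  show t * (C (p * t * 1) (p * t * 1) / (p * t)) = C (p * t) (p * t) / p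
  rw [mul_one]
  field_simp

theorem tdm_one_iff_tdc_one (C Λ : ℝ → ℝ → ℝ)
    (hC : IsCopula C) (hΛ : HasTDF C Λ)
    (μ : Measure (ℝ × ℝ)) (hμ : IsTailGenMeasure μ)
    (hdiag : ∃ u₀ : ℝ, u₀ ∈ Ioo (0:ℝ) 1 ∧ ∀ ε : ℝ, 0 < ε →
      0 < μ (Metric.ball ((u₀, u₀) : ℝ × ℝ) ε ∩ (Icc (0:ℝ) 1 ×ˢ Icc (0:ℝ) 1))) :
    (tdm Λ μ = 1 → Λ 1 1 = 1) ∧ (tdm Λ μ = 1 ↔ Λ 1 1 = 1) := by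
  set Q : Set (ℝ × ℝ) := Icc (0:ℝ) 1 ×ˢ Icc (0:ℝ) 1 with hQdef
  haveI : IsProbabilityMeasure μ := hμ.1
  have hQae : ∀ᵐ q ∂μ, q ∈ Q := by
    rw [ae_iff]
    exact hμ.2.1
  set m : ℝ × ℝ → ℝ := fun q => min q.1 q.2 with hm
  have hmc : Continuous m := continuous_fst.min continuous_snd
  have hmint : Integrable m μ := by
    refine (integrable_const (1:ℝ)).mono' hmc.aestronglyMeasurable ?_
    filter_upwards [hQae] with q hq
    obtain ⟨⟨a1, a2⟩, ⟨b1, b2⟩⟩ := hq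
    rw [Real.norm_eq_abs, abs_le]
    constructor
    · have : (0:ℝ) ≤ m q := le_min a1 b1
      linarith
    · exact (min_le_left _ _).trans a2
  have hm_nonneg : 0 ≤ᵐ[μ] m := by
    filter_upwards [hQae] with q hq
    exact le_min hq.1.1 hq.2.1
  have hmpos : 0 < ∫ q, m q ∂μ := by
    rw [integral_pos_iff_support_of_nonneg_ae hm_nonneg hmint]
    set B := {q : ℝ × ℝ | q.1 = 0 ∨ q.2 = 0} with hB
    have hA : Bᶜ ∩ Q ⊆ Function.support m := by
      rintro q ⟨hqB, hqQ⟩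
      have hq' : ¬(q.1 = 0 ∨ q.2 = 0) := hqB
      push_neg at hq'
      have h1 : 0 < q.1 := lt_of_le_of_ne hqQ.1.1 (Ne.symm hq'.1)
      have h2 : 0 < q.2 := lt_of_le_of_ne hqQ.2.1 (Ne.symm hq'.2)
      exact ne_of_gt (lt_min h1 h2)
    refine lt_of_lt_of_le ?_ (measure_mono hA)
    by_contra h
    push_neg at h
    have h0 : μ (Bᶜ ∩ Q) = 0 := le_antisymm h zero_le
    have hsub : (Set.univ : Set (ℝ × ℝ)) ⊆ (Bᶜ ∩ Q) ∪ (B ∪ Qᶜ) := by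
      intro q _
      by_cases h1 : q ∈ B
      · exact Or.inr (Or.inl h1)
      · by_cases h2 : q ∈ Q
        · exact Or.inl ⟨h1, h2⟩
        · exact Or.inr (Or.inr h2)
    have hlt : μ Set.univ < 1 := by
      calc μ Set.univ ≤ μ ((Bᶜ ∩ Q) ∪ (B ∪ Qᶜ)) := measure_mono hsub
        _ ≤ μ (Bᶜ ∩ Q) + μ (B ∪ Qᶜ) := measure_union_le _ _
        _ ≤ 0 + (μ B + μ Qᶜ) := by
            exact add_le_add h0.le (measure_union_le _ _)
        _ = μ B := by rw [hμ.2.1]; simp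
        _ < 1 := hμ.2.2
    rw [measure_univ] at hlt
    exact lt_irrefl _ hlt
  have hmne : ∫ q, m q ∂μ ≠ 0 := ne_of_gt hmpos
  have dir1 : tdm Λ μ = 1 → Λ 1 1 = 1 := by
    intro h1
    have hΛint : Integrable (fun q : ℝ × ℝ => Λ q.1 q.2) μ := by
      by_contra h
      rw [tdm, integral_undef h, zero_div] at h1
      exact zero_ne_one h1
    have hIeq : ∫ q, Λ q.1 q.2 ∂μ = ∫ q, m q ∂μ := by
      rw [tdm, div_eq_one_iff_eq hmne] at h1
      exact h1
    set g : ℝ × ℝ → ℝ := fun q => m q - Λ q.1 q.2 with hg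
    have hgint : Integrable g μ := hmint.sub hΛint
    have hgnn : 0 ≤ᵐ[μ] g := by
      filter_upwards [hQae] with q hq
      have hle := Lam_le_min C Λ hC hΛ hq.1.1 hq.2.1
      simp only [hg, hm, Pi.zero_apply]
      linarith
    have hgzero : ∫ q, g q ∂μ = 0 := by
      have := integral_sub hmint hΛint
      simp only [hg]
      rw [integral_sub hmint hΛint, hIeq, sub_self]
    have hae : g =ᵐ[μ] 0 := (integral_eq_zero_iff_of_nonneg_ae hgnn hgint).mp hgzero
    obtain ⟨u₀, hu₀, hball⟩ := hdiag
    by_contra hne1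
    have hLle : Λ 1 1 ≤ 1 := by
      simpa using Lam_le_min C Λ hC hΛ zero_le_one zero_le_one
    have hL0 : 0 ≤ Λ 1 1 := Lam_nonneg C Λ hC hΛ zero_le_one zero_le_one
    have hLlt : Λ 1 1 < 1 := lt_of_le_of_ne hLle hne1
    set L := Λ 1 1 with hLdef
    set ε : ℝ := u₀ * (1 - L) / (2 * (1 + L)) with hε
    have hε0 : 0 < ε := div_pos (mul_pos hu₀.1 (by linarith)) (by linarith)
    have hkey : ε * (1 + L) < u₀ * (1 - L) := by
      rw [hε, div_mul_eq_mul_div, mul_comm (2:ℝ) (1+L), ← div_div,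
        mul_div_assoc, div_self (by linarith : (1:ℝ) + L ≠ 0), mul_one]
      linarith [div_pos (mul_pos hu₀.1 (by linarith : (0:ℝ) < 1 - L)) two_pos]
    have hNull : μ {q | ¬ g q = 0} = 0 := by
      have h := hae
      rw [EventuallyEq, ae_iff] at h
      simpa using h
    have hS : 0 < μ ((Metric.ball ((u₀, u₀) : ℝ × ℝ) ε ∩ Q) \ {q | ¬ g q = 0}) := by
      rw [measure_diff_null hNull]
      exact hball ε hε0
    obtain ⟨q, hqmem, hqg⟩ := nonempty_of_measure_ne_zero (ne_of_gt hS)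
    have hgq : g q = 0 := not_not.mp hqg
    have hqQ : q ∈ Q := hqmem.2
    have hdist : dist q ((u₀, u₀) : ℝ × ℝ) < ε := Metric.mem_ball.mp hqmem.1
    rw [Prod.dist_eq] at hdist
    have hd1 : |q.1 - u₀| < ε :=
      lt_of_le_of_lt (le_trans (le_of_eq (Real.dist_eq _ _).symm) (le_max_left _ _)) hdist
    have hd2 : |q.2 - u₀| < ε :=
      lt_of_le_of_lt (le_trans (le_of_eq (Real.dist_eq _ _).symm) (le_max_right _ _)) hdist
    obtain ⟨hd1a, hd1b⟩ := abs_lt.mp hd1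
    obtain ⟨hd2a, hd2b⟩ := abs_lt.mp hd2
    have hΛq : Λ q.1 q.2 = m q := by
      simp only [hg] at hgq
      linarith
    have hmono : Λ q.1 q.2 ≤ Λ (u₀ + ε) (u₀ + ε) :=
      Lam_mono C Λ hC hΛ hqQ.1.1 hqQ.2.1 (by linarith) (by linarith)
    have hhom : Λ (u₀ + ε) (u₀ + ε) = (u₀ + ε) * L :=
      Lam_homog C Λ hΛ (by linarith [hu₀.1])
    have hmq : u₀ - ε ≤ m q := le_min (by linarith) (by linarith)
    nlinarith
  have dir2 : Λ 1 1 = 1 → tdm Λ μ = 1 := by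
    intro hL
    have heq : (fun q : ℝ × ℝ => Λ q.1 q.2) =ᵐ[μ] m := by
      filter_upwards [hQae] with q hq
      have hle := Lam_le_min C Λ hC hΛ hq.1.1 hq.2.1
      have hge : m q ≤ Λ q.1 q.2 := by
        rcases eq_or_lt_of_le (le_min hq.1.1 hq.2.1 : (0:ℝ) ≤ m q) with h0 | h0
        · have hm0 : m q = 0 := h0.symm
          rw [hm0]
          exact Lam_nonneg C Λ hC hΛ hq.1.1 hq.2.1
        · have h1 : Λ (m q) (m q) ≤ Λ q.1 q.2 :=
            Lam_mono C Λ hC hΛ h0.le h0.le (min_le_left _ _) (min_le_right _ _)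
          have h2 : Λ (m q) (m q) = m q * Λ 1 1 := Lam_homog C Λ hΛ h0
          rw [hL, mul_one] at h2
          linarith
      exact le_antisymm hle hge
    rw [tdm, integral_congr_ae heq, div_self hmne]
  exact ⟨dir1, ⟨dir1, dir2⟩⟩
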